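/- arXiv:2010.07618 — 3 statements merged into one kernel-verified Lean document; each statement's English description precedes it below -/
import Mathlib

section
/- Let X, Y be independent standard normal random variables, and let c₁, c₂ ∈ ℝ. Then c₁(X − Y) + c₂ Z, where Z is standard normal independent of (X,Y), is a centered Gaussian random variable with variance 2c₁² + c₂². Consequently, if Ẑ_t − Z_t, normalized by √ε, converges in distribution to U'·√(bσ/(2f))·(ζ̂ − ξ̂) + (U̇/I)·N with ζ̂, ξ̂, N independent standard normals (conditionally on Y_t), then ε^{−1} E(Ẑ_t − Z_t)² → (bσ/f)·E[U'_y(t,Y_t,ϑ₀)²] + E[U̇(t,Y_t,ϑ₀)²]/I. -/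
open Real Filter MeasureTheory ProbabilityTheory

section AuxStmt12
open scoped ENNReal NNReal

lemma aux_integral_exp_quadratic {α : ℝ} (hα : 0 < α) (β γ : ℝ) :
    ∫ x : ℝ, Real.exp (-α * x ^ 2 + β * x + γ)
      = Real.exp (β ^ 2 / (4 * α) + γ) * Real.sqrt (π / α) := by
  have h : ∀ x : ℝ, -α * x ^ 2 + β * x + γ
      = (β ^ 2 / (4 * α) + γ) + (-α * (x - β / (2 * α)) ^ 2) := by
    intro x; field_simp; ring
  calc ∫ x : ℝ, Real.exp (-α * x ^ 2 + β * x + γ)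
      = ∫ x : ℝ, Real.exp (β ^ 2 / (4 * α) + γ) * Real.exp (-α * (x - β / (2 * α)) ^ 2) := by
        simp_rw [← Real.exp_add, ← h]
    _ = Real.exp (β ^ 2 / (4 * α) + γ) * ∫ x : ℝ, Real.exp (-α * (x - β / (2 * α)) ^ 2) :=
        integral_const_mul _ _
    _ = _ := by
        rw [integral_sub_right_eq_self (fun x : ℝ => Real.exp (-α * x ^ 2)) (β / (2 * α)),
          integral_gaussian]

lemma aux_pdf_conv {v₁ v₂ : ℝ≥0} (h₁ : v₁ ≠ 0) (h₂ : v₂ ≠ 0) (y : ℝ) :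
    (∫ x : ℝ, gaussianPDFReal 0 v₁ x * gaussianPDFReal 0 v₂ (y - x))
      = gaussianPDFReal 0 (v₁ + v₂) y := by
  have hv₁ : (0:ℝ) < v₁ := NNReal.coe_pos.mpr (pos_iff_ne_zero.mpr h₁)
  have hv₂ : (0:ℝ) < v₂ := NNReal.coe_pos.mpr (pos_iff_ne_zero.mpr h₂)
  have hV : (0:ℝ) < (v₁:ℝ) + v₂ := by linarith
  set α : ℝ := ((v₁:ℝ) + v₂) / (2 * v₁ * v₂) with hαdef
  have hα : 0 < α := by positivity
  have key : ∀ x : ℝ, gaussianPDFReal 0 v₁ x * gaussianPDFReal 0 v₂ (y - x)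
      = ((Real.sqrt (2*π*v₁))⁻¹ * (Real.sqrt (2*π*v₂))⁻¹)
        * Real.exp (-α * x^2 + (y/(v₂:ℝ)) * x + (-(y^2)/(2*(v₂:ℝ)))) := by
    intro x
    simp only [gaussianPDFReal, sub_zero]
    rw [mul_mul_mul_comm, ← Real.exp_add]
    congr 1
    rw [hαdef]
    field_simp
    ring
  rw [integral_congr_ae (Eventually.of_forall key), integral_const_mul,
    aux_integral_exp_quadratic hα]
  have hexp : (y/(v₂:ℝ))^2 / (4*α) + (-(y^2)/(2*(v₂:ℝ))) = -(y^2) / (2*((v₁:ℝ)+v₂)) := by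
    rw [hαdef]; field_simp; ring
  have hsqrt : (Real.sqrt (2*π*v₁))⁻¹ * (Real.sqrt (2*π*v₂))⁻¹ * Real.sqrt (π/α)
      = (Real.sqrt (2*π*((v₁:ℝ)+v₂)))⁻¹ := by
    rw [← Real.sqrt_inv, ← Real.sqrt_inv, ← Real.sqrt_mul (by positivity),
      ← Real.sqrt_mul (by positivity), ← Real.sqrt_inv]
    congr 1
    rw [hαdef]
    field_simp
  rw [hexp]
  rw [gaussianPDFReal]
  push_cast
  rw [← hsqrt]
  ring

lemma aux_pdf_le {v : ℝ≥0} (t : ℝ) :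
    gaussianPDFReal 0 v t ≤ (Real.sqrt (2*π*v))⁻¹ := by
  rw [gaussianPDFReal, sub_zero]
  have h1 : Real.exp (-t^2 / (2*(v:ℝ))) ≤ 1 := by
    rw [Real.exp_le_one_iff]
    rcases eq_or_ne v 0 with rfl | hv
    · simp
    · have : (0:ℝ) < v := NNReal.coe_pos.mpr (pos_iff_ne_zero.mpr hv)
      apply div_nonpos_of_nonpos_of_nonneg (neg_nonpos.mpr (sq_nonneg t)) (by positivity)
  calc (Real.sqrt (2*π*v))⁻¹ * Real.exp (-t^2 / (2*(v:ℝ)))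
      ≤ (Real.sqrt (2*π*v))⁻¹ * 1 := by
        apply mul_le_mul_of_nonneg_left h1 (by positivity)
    _ = _ := mul_one _

lemma aux_lint_conv {v₁ v₂ : ℝ≥0} (h₁ : v₁ ≠ 0) (h₂ : v₂ ≠ 0) (z : ℝ) :
    ∫⁻ x, gaussianPDF 0 v₁ x * gaussianPDF 0 v₂ (z - x) = gaussianPDF 0 (v₁ + v₂) z := by
  have hint : Integrable (fun x => gaussianPDFReal 0 v₁ x * gaussianPDFReal 0 v₂ (z - x)) := by
    have h' : Integrable (fun x => gaussianPDFReal 0 v₂ (z - x) * gaussianPDFReal 0 v₁ x) := by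
      apply Integrable.bdd_mul (c := (Real.sqrt (2*π*v₂))⁻¹) (integrable_gaussianPDFReal 0 v₁)
      · exact ((measurable_gaussianPDFReal 0 v₂).comp
          (measurable_const.sub measurable_id)).aestronglyMeasurable
      · refine Eventually.of_forall (fun x => ?_)
        rw [Real.norm_eq_abs, abs_of_nonneg (gaussianPDFReal_nonneg _ _ _)]
        exact aux_pdf_le _
    simpa [mul_comm] using h'
  calc ∫⁻ x, gaussianPDF 0 v₁ x * gaussianPDF 0 v₂ (z - x)
      = ∫⁻ x, ENNReal.ofReal (gaussianPDFReal 0 v₁ x * gaussianPDFReal 0 v₂ (z - x)) := by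
        congr 1 with x
        rw [gaussianPDF, gaussianPDF, ← ENNReal.ofReal_mul (gaussianPDFReal_nonneg _ _ _)]
    _ = ENNReal.ofReal (∫ x, gaussianPDFReal 0 v₁ x * gaussianPDFReal 0 v₂ (z - x)) := by
        rw [← ofReal_integral_eq_lintegral_ofReal hint
          (Eventually.of_forall (fun x =>
            mul_nonneg (gaussianPDFReal_nonneg _ _ _) (gaussianPDFReal_nonneg _ _ _)))]
    _ = _ := by rw [aux_pdf_conv h₁ h₂ z]; rfl

lemma aux_gauss_conv (v₁ v₂ : ℝ≥0) :
    Measure.map (fun p : ℝ × ℝ => p.1 + p.2) ((gaussianReal 0 v₁).prod (gaussianReal 0 v₂))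
      = gaussianReal 0 (v₁ + v₂) := by
  rcases eq_or_ne v₁ 0 with rfl | h₁
  · rw [zero_add, gaussianReal_zero_var, Measure.dirac_prod,
      Measure.map_map measurable_add measurable_prodMk_left]
    simp only [Function.comp_def, zero_add]
    exact Measure.map_id
  rcases eq_or_ne v₂ 0 with rfl | h₂
  · rw [add_zero, gaussianReal_zero_var, Measure.prod_dirac,
      Measure.map_map measurable_add measurable_prodMk_right]
    simp only [Function.comp_def, add_zero]
    exact Measure.map_id
  have hpdfne : ∀ (v : ℝ≥0) (x : ℝ), gaussianPDF 0 v x ≠ ⊤ := fun v x => by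
    simp [gaussianPDF]
  have hV : v₁ + v₂ ≠ 0 := fun h => h₁ (by simpa using (add_eq_zero.mp h).1)
  ext s hs
  have hindne : ∀ y : ℝ, s.indicator (fun _ => (1:ℝ≥0∞)) y ≠ ⊤ := by
    intro y; by_cases h : y ∈ s <;> simp [h]
  rw [Measure.map_apply measurable_add hs, Measure.prod_apply (measurable_add hs)]
  have hmk : ∀ x : ℝ, (Prod.mk x ⁻¹' ((fun p : ℝ × ℝ => p.1 + p.2) ⁻¹' s))
      = (fun y => x + y) ⁻¹' s := fun x => rfl
  have hind : ∀ x y : ℝ, ((fun y => x + y) ⁻¹' s).indicator (gaussianPDF 0 v₂) y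
      = s.indicator (fun _ => (1:ℝ≥0∞)) (x + y) * gaussianPDF 0 v₂ y := by
    intro x y
    by_cases h : x + y ∈ s <;> simp [Set.indicator, h]
  have step1 : ∀ x : ℝ, (gaussianReal 0 v₂) (Prod.mk x ⁻¹' ((fun p : ℝ × ℝ => p.1 + p.2) ⁻¹' s))
      = ∫⁻ y, s.indicator (fun _ => (1:ℝ≥0∞)) (x + y) * gaussianPDF 0 v₂ y := by
    intro x
    rw [hmk, gaussianReal_apply _ h₂, ← lintegral_indicator (hs.preimage (measurable_const_add x))]
    congr 1 with y
    exact hind x y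
  simp_rw [step1]
  rw [gaussianReal_of_var_ne_zero _ h₁,
    lintegral_withDensity_eq_lintegral_mul _ (measurable_gaussianPDF 0 v₁)
      (by
        apply Measurable.lintegral_prod_right (f := fun (x : ℝ) (y : ℝ) =>
          s.indicator (fun _ => (1:ℝ≥0∞)) (x + y) * gaussianPDF 0 v₂ y)
        exact ((measurable_const.indicator hs).comp measurable_add).mul
          ((measurable_gaussianPDF 0 v₂).comp measurable_snd))]
  have step2 : ∀ x : ℝ, (∫⁻ y, s.indicator (fun _ => (1:ℝ≥0∞)) (x + y) * gaussianPDF 0 v₂ y)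
      = ∫⁻ y, s.indicator (fun _ => (1:ℝ≥0∞)) y * gaussianPDF 0 v₂ (y - x) := by
    intro x
    have := lintegral_add_left_eq_self (μ := volume)
      (fun y => s.indicator (fun _ => (1:ℝ≥0∞)) y * gaussianPDF 0 v₂ (y - x)) x
    rw [← this]
    congr 1 with y
    simp [add_sub_cancel_left]
  simp_rw [Pi.mul_apply, step2]
  calc ∫⁻ x, gaussianPDF 0 v₁ x * ∫⁻ y, s.indicator (fun _ => (1:ℝ≥0∞)) y * gaussianPDF 0 v₂ (y - x)
      = ∫⁻ x, ∫⁻ y, s.indicator (fun _ => (1:ℝ≥0∞)) y *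
          (gaussianPDF 0 v₁ x * gaussianPDF 0 v₂ (y - x)) := by
        congr 1 with x
        rw [← lintegral_const_mul' _ _ (hpdfne v₁ x)]
        congr 1 with y
        ring
    _ = ∫⁻ y, ∫⁻ x, s.indicator (fun _ => (1:ℝ≥0∞)) y *
          (gaussianPDF 0 v₁ x * gaussianPDF 0 v₂ (y - x)) := by
        apply lintegral_lintegral_swap
        apply Measurable.aemeasurable
        exact ((measurable_const.indicator hs).comp measurable_snd).mul
          (((measurable_gaussianPDF 0 v₁).comp measurable_fst).mul
            ((measurable_gaussianPDF 0 v₂).comp (measurable_snd.sub measurable_fst)))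
    _ = ∫⁻ y, s.indicator (fun _ => (1:ℝ≥0∞)) y * gaussianPDF 0 (v₁ + v₂) y := by
        congr 1 with y
        rw [lintegral_const_mul' _ _ (hindne y), aux_lint_conv h₁ h₂ y]
    _ = ∫⁻ y in s, gaussianPDF 0 (v₁ + v₂) y := by
        rw [← lintegral_indicator hs]
        congr 1 with y
        by_cases h : y ∈ s <;> simp [Set.indicator, h]
    _ = _ := (gaussianReal_apply _ hV s).symm

lemma aux_int_sq_exp : Integrable (fun x : ℝ => x ^ 2 * Real.exp (-(1/2:ℝ) * x ^ 2)) := by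
  have h := integrable_rpow_mul_exp_neg_mul_sq (b := (1/2:ℝ)) (by norm_num)
    (s := 2) (by norm_num)
  have h2 : ∀ x : ℝ, x ^ (2:ℝ) = x ^ 2 := fun x => by
    rw [show (2:ℝ) = ((2:ℕ):ℝ) by norm_num, Real.rpow_natCast]
  simpa [h2] using h

lemma aux_int_lin_exp : Integrable (fun x : ℝ => x * Real.exp (-(1/2:ℝ) * x ^ 2)) := by
  have h := integrable_rpow_mul_exp_neg_mul_sq (b := (1/2:ℝ)) (by norm_num)
    (s := 1) (by norm_num)
  simpa using h

lemma aux_int_exp : Integrable (fun x : ℝ => Real.exp (-(1/2:ℝ) * x ^ 2)) :=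
  integrable_exp_neg_mul_sq (by norm_num)

lemma aux_sq_moment : ∫ x : ℝ, x ^ 2 * Real.exp (-(1/2:ℝ) * x ^ 2) = Real.sqrt (2 * π) := by
  have hu : ∀ x : ℝ, HasDerivAt (fun x : ℝ => x) 1 x := fun x => hasDerivAt_id x
  have hv : ∀ x : ℝ, HasDerivAt (fun x : ℝ => -Real.exp (-(1/2:ℝ) * x ^ 2))
      (x * Real.exp (-(1/2:ℝ) * x ^ 2)) x := by
    intro x
    have h1 : HasDerivAt (fun x : ℝ => -(1/2:ℝ) * x ^ 2) (-(1/2:ℝ) * (2 * x)) x := by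
      simpa using (hasDerivAt_pow 2 x).const_mul (-(1/2:ℝ))
    have h2 : HasDerivAt (fun x : ℝ => -Real.exp (-(1/2:ℝ) * x ^ 2)) _ x := (h1.exp).neg
    convert h2 using 1
    ring
  have hint1 : Integrable ((fun x : ℝ => x) * fun x => x * Real.exp (-(1/2:ℝ) * x ^ 2)) := by
    have := aux_int_sq_exp
    apply this.congr
    filter_upwards with x
    simp [Pi.mul_apply]; ring
  have hint2 : Integrable ((fun _ : ℝ => (1:ℝ)) * fun x => -Real.exp (-(1/2:ℝ) * x ^ 2)) := by
    have := aux_int_exp.neg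
    apply this.congr
    filter_upwards with x
    simp
  have hint3 : Integrable ((fun x : ℝ => x) * fun x => -Real.exp (-(1/2:ℝ) * x ^ 2)) := by
    have := aux_int_lin_exp.neg
    apply this.congr
    filter_upwards with x
    simp only [Pi.neg_apply, Pi.mul_apply, neg_mul, mul_neg, neg_inj]
  have key := integral_mul_deriv_eq_deriv_mul_of_integrable (fun x _ => hu x) (fun x _ => hv x) hint1 hint2 hint3
  have e1 : ∫ x : ℝ, x * (x * Real.exp (-(1/2:ℝ) * x ^ 2))
      = ∫ x : ℝ, x ^ 2 * Real.exp (-(1/2:ℝ) * x ^ 2) := by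
    congr 1 with x; ring
  rw [e1] at key
  rw [key]
  have e2 : ∫ x : ℝ, (1:ℝ) * -Real.exp (-(1/2:ℝ) * x ^ 2)
      = - ∫ x : ℝ, Real.exp (-(1/2:ℝ) * x ^ 2) := by
    rw [← integral_neg]; congr 1 with x; ring
  rw [e2, integral_gaussian, show π / (1/2:ℝ) = 2 * π by ring]
  ring

lemma aux_odd_moment : ∫ x : ℝ, x * Real.exp (-(1/2:ℝ) * x ^ 2) = 0 := by
  have h := integral_neg_eq_self (fun x : ℝ => x * Real.exp (-(1/2:ℝ) * x ^ 2)) volume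
  simp only [neg_sq, neg_mul] at h
  rw [integral_neg] at h
  simp only [neg_mul] at h ⊢
  linarith

lemma aux_pdf_one (x : ℝ) :
    gaussianPDFReal 0 1 x = (Real.sqrt (2 * π))⁻¹ * Real.exp (-(1/2:ℝ) * x ^ 2) := by
  rw [gaussianPDFReal]
  push_cast
  rw [sub_zero, mul_one]
  congr 1
  ring

lemma aux_gauss_eq : gaussianReal 0 1
    = volume.withDensity (fun x => ((Real.toNNReal (gaussianPDFReal 0 1 x) : ℝ≥0) : ℝ≥0∞)) := by
  rw [gaussianReal_of_var_ne_zero 0 one_ne_zero]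
  rfl

lemma aux_meas_pdf : Measurable (fun x => Real.toNNReal (gaussianPDFReal 0 1 x)) :=
  (measurable_gaussianPDFReal 0 1).real_toNNReal

lemma aux_gauss_integral_sq : ∫ x, x ^ 2 ∂(gaussianReal 0 1) = 1 := by
  rw [aux_gauss_eq, integral_withDensity_eq_integral_smul aux_meas_pdf]
  have : ∀ x : ℝ, Real.toNNReal (gaussianPDFReal 0 1 x) • x ^ 2
      = (Real.sqrt (2*π))⁻¹ * (x ^ 2 * Real.exp (-(1/2:ℝ) * x ^ 2)) := by
    intro x
    rw [NNReal.smul_def, smul_eq_mul, Real.coe_toNNReal _ (gaussianPDFReal_nonneg 0 1 x),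
      aux_pdf_one]
    ring
  rw [integral_congr_ae (Eventually.of_forall this), integral_const_mul, aux_sq_moment]
  rw [inv_mul_cancel₀ (Real.sqrt_ne_zero'.mpr (by positivity))]

lemma aux_gauss_integral_id : ∫ x, x ∂(gaussianReal 0 1) = 0 := by
  rw [aux_gauss_eq, integral_withDensity_eq_integral_smul aux_meas_pdf]
  have : ∀ x : ℝ, Real.toNNReal (gaussianPDFReal 0 1 x) • x
      = (Real.sqrt (2*π))⁻¹ * (x * Real.exp (-(1/2:ℝ) * x ^ 2)) := by
    intro x
    rw [NNReal.smul_def, smul_eq_mul, Real.coe_toNNReal _ (gaussianPDFReal_nonneg 0 1 x),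
      aux_pdf_one]
    ring
  rw [integral_congr_ae (Eventually.of_forall this), integral_const_mul, aux_odd_moment, mul_zero]

lemma aux_gauss_integrable_sq : Integrable (fun x => x ^ 2) (gaussianReal 0 1) := by
  rw [aux_gauss_eq, integrable_withDensity_iff_integrable_smul aux_meas_pdf]
  have h : Integrable (fun x : ℝ => (Real.sqrt (2*π))⁻¹ * (x ^ 2 * Real.exp (-(1/2:ℝ) * x ^ 2))) :=
    aux_int_sq_exp.const_mul _
  apply h.congr
  filter_upwards with x
  rw [NNReal.smul_def, smul_eq_mul, Real.coe_toNNReal _ (gaussianPDFReal_nonneg 0 1 x),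
    aux_pdf_one]
  ring

lemma aux_gauss_integrable_id : Integrable (fun x => x) (gaussianReal 0 1) := by
  rw [aux_gauss_eq, integrable_withDensity_iff_integrable_smul aux_meas_pdf]
  have h : Integrable (fun x : ℝ => (Real.sqrt (2*π))⁻¹ * (x * Real.exp (-(1/2:ℝ) * x ^ 2))) :=
    aux_int_lin_exp.const_mul _
  apply h.congr
  filter_upwards with x
  rw [NNReal.smul_def, smul_eq_mul, Real.coe_toNNReal _ (gaussianPDFReal_nonneg 0 1 x),
    aux_pdf_one]
  ring

end AuxStmt12

theorem stmt_12 {Ω : Type*} [MeasurableSpace Ω] (P : Measure Ω) [IsProbabilityMeasure P]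
    (X Y Z : Ω → ℝ) (hX : Measurable X) (hY : Measurable Y) (hZ : Measurable Z)
    (hXlaw : Measure.map X P = gaussianReal 0 1)
    (hYlaw : Measure.map Y P = gaussianReal 0 1)
    (hZlaw : Measure.map Z P = gaussianReal 0 1)
    (hindep : iIndepFun ![X, Y, Z] P)
    (c₁ c₂ : ℝ)
    (U₁ U₂ : Ω → ℝ) (hU₁ : Measurable U₁) (hU₂ : Measurable U₂)
    (hU₁int : Integrable (fun ω => (U₁ ω) ^ 2) P)
    (hU₂int : Integrable (fun ω => (U₂ ω) ^ 2) P)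
    (hindep2 : IndepFun (fun ω => (X ω, Y ω, Z ω)) (fun ω => (U₁ ω, U₂ ω)) P)
    (b σ f I : ℝ) (hb : 0 < b) (hσ : 0 < σ) (hf : 0 < f) (hI : 0 < I) :
    Measure.map (fun ω => c₁ * (X ω - Y ω) + c₂ * Z ω) P
      = gaussianReal 0 (Real.toNNReal (2 * c₁ ^ 2 + c₂ ^ 2)) ∧
    ∀ D : ℝ → ℝ,
      Tendsto D (nhdsWithin 0 (Set.Ioi 0))
        (nhds (∫ ω, (U₁ ω * Real.sqrt (b * σ / (2 * f)) * (X ω - Y ω)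
          + (U₂ ω / Real.sqrt I) * Z ω) ^ 2 ∂P)) →
      Tendsto D (nhdsWithin 0 (Set.Ioi 0))
        (nhds ((b * σ / f) * ∫ ω, (U₁ ω) ^ 2 ∂P + (∫ ω, (U₂ ω) ^ 2 ∂P) / I)) := by
  constructor
  · -- Part 1: the Gaussian law of the sum
    have hfmeas : ∀ i, Measurable (![X, Y, Z] i) := by
      intro i; fin_cases i <;> simpa using (by assumption : Measurable _)
    have h01 : IndepFun X Y P := by
      have := hindep.indepFun (show (0:Fin 3) ≠ 1 by decide)
      simpa using this
    -- law of -Y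
    have hnegY : Measure.map (fun ω => -Y ω) P = gaussianReal 0 1 := by
      have h1 : Measure.map (fun ω => -Y ω) P
          = Measure.map (fun x : ℝ => (-1) * x) (Measure.map Y P) := by
        rw [Measure.map_map (measurable_const_mul (-1)) hY]
        congr 1
        funext ω
        simp [Function.comp]
      rw [h1, hYlaw, gaussianReal_map_const_mul]
      norm_num
    have hindXnY : IndepFun X (fun ω => -Y ω) P := h01.comp measurable_id measurable_neg
    have hXY : Measure.map (fun ω => X ω - Y ω) P = gaussianReal 0 2 := by
      have hpair := (indepFun_iff_map_prod_eq_prod_map_map hX.aemeasurable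
        hY.neg.aemeasurable).mp hindXnY
      calc Measure.map (fun ω => X ω - Y ω) P
          = Measure.map ((fun p : ℝ × ℝ => p.1 + p.2) ∘ (fun ω => (X ω, -Y ω))) P := by
            have he : (fun ω => X ω - Y ω)
                = ((fun p : ℝ × ℝ => p.1 + p.2) ∘ (fun ω => (X ω, -Y ω))) := by
              funext ω; simp [Function.comp, sub_eq_add_neg]
            rw [he]
        _ = Measure.map (fun p : ℝ × ℝ => p.1 + p.2) (Measure.map (fun ω => (X ω, -Y ω)) P) :=
            (Measure.map_map measurable_add (hX.prodMk hY.neg)).symm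
        _ = gaussianReal 0 2 := by
            rw [show (fun ω => (X ω, -Y ω)) = (fun ω => (X ω, (-Y) ω)) from rfl, hpair, hXlaw,
              show (-Y) = (fun ω => -Y ω) from rfl, hnegY, aux_gauss_conv]
            norm_num
    have hA : Measure.map (fun ω => c₁ * (X ω - Y ω)) P
        = gaussianReal 0 (NNReal.mk (c₁^2) (sq_nonneg _) * 2) := by
      have h1 : Measure.map (fun ω => c₁ * (X ω - Y ω)) P
          = Measure.map (fun x : ℝ => c₁ * x) (Measure.map (fun ω => X ω - Y ω) P) := by
        rw [Measure.map_map (measurable_const_mul c₁) (f := fun ω => X ω - Y ω) (hX.sub hY)]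
        rfl
      rw [h1, hXY, gaussianReal_map_const_mul, mul_zero]
    have hB : Measure.map (fun ω => c₂ * Z ω) P = gaussianReal 0 (NNReal.mk (c₂^2) (sq_nonneg _) * 1) := by
      have h1 : Measure.map (fun ω => c₂ * Z ω) P
          = Measure.map (fun x : ℝ => c₂ * x) (Measure.map Z P) := by
        rw [Measure.map_map (measurable_const_mul c₂) hZ]
        rfl
      rw [h1, hZlaw, gaussianReal_map_const_mul, mul_zero]
    have hAB : IndepFun (fun ω => c₁ * (X ω - Y ω)) (fun ω => c₂ * Z ω) P := by
      have h3 := hindep.indepFun_prodMk hfmeas 0 1 2 (by decide) (by decide)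
      simp only [Matrix.cons_val_zero, Matrix.cons_val_one, Matrix.head_cons,
        Matrix.cons_val_two, Matrix.tail_cons] at h3
      exact h3.comp ((measurable_fst.sub measurable_snd).const_mul c₁)
        (measurable_id.const_mul c₂)
    have hpair2 := (indepFun_iff_map_prod_eq_prod_map_map
      (f := fun ω => c₁ * (X ω - Y ω)) (g := fun ω => c₂ * Z ω)
      ((hX.sub hY).const_mul c₁).aemeasurable (hZ.const_mul c₂).aemeasurable).mp hAB
    calc Measure.map (fun ω => c₁ * (X ω - Y ω) + c₂ * Z ω) P
        = Measure.map ((fun p : ℝ × ℝ => p.1 + p.2)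
            ∘ (fun ω => (c₁ * (X ω - Y ω), c₂ * Z ω))) P := rfl
      _ = Measure.map (fun p : ℝ × ℝ => p.1 + p.2)
            (Measure.map (fun ω => (c₁ * (X ω - Y ω), c₂ * Z ω)) P) :=
          (Measure.map_map measurable_add
            (((hX.sub hY).const_mul c₁).prodMk (hZ.const_mul c₂))).symm
      _ = gaussianReal 0 (NNReal.mk (c₁^2) (sq_nonneg _) * 2 + NNReal.mk (c₂^2) (sq_nonneg _) * 1) := by
          rw [hpair2, hA, hB, aux_gauss_conv]
      _ = gaussianReal 0 (Real.toNNReal (2 * c₁ ^ 2 + c₂ ^ 2)) := by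
          congr 1
          apply NNReal.coe_injective
          rw [Real.coe_toNNReal _ (by positivity)]
          push_cast
          ring
  · -- Part 2: the limit identity
    have key : (∫ ω, (U₁ ω * Real.sqrt (b * σ / (2 * f)) * (X ω - Y ω)
          + (U₂ ω / Real.sqrt I) * Z ω) ^ 2 ∂P)
        = (b * σ / f) * ∫ ω, (U₁ ω) ^ 2 ∂P + (∫ ω, (U₂ ω) ^ 2 ∂P) / I := by
      set s : ℝ := Real.sqrt (b * σ / (2 * f)) with hs_def
      have hs2 : s ^ 2 = b * σ / (2 * f) := Real.sq_sqrt (by positivity)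
      have hsI : Real.sqrt I ^ 2 = I := Real.sq_sqrt hI.le
      -- transfer of gaussian moments
      have msq : ∀ (W : Ω → ℝ), Measurable W → Measure.map W P = gaussianReal 0 1 →
          Integrable (fun ω => W ω ^ 2) P ∧ ∫ ω, W ω ^ 2 ∂P = 1 := by
        intro W hW hlaw
        have hmeas : AEStronglyMeasurable (fun x : ℝ => x ^ 2) (Measure.map W P) :=
          (measurable_id.pow_const 2).aestronglyMeasurable
        constructor
        · have h1 : Integrable (fun x : ℝ => x ^ 2) (Measure.map W P) := by
            rw [hlaw]; exact aux_gauss_integrable_sq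
          exact (integrable_map_measure hmeas hW.aemeasurable).mp h1
        · have h2 := integral_map hW.aemeasurable hmeas
          rw [hlaw, aux_gauss_integral_sq] at h2
          exact h2.symm
      have mid : ∀ (W : Ω → ℝ), Measurable W → Measure.map W P = gaussianReal 0 1 →
          Integrable W P ∧ ∫ ω, W ω ∂P = 0 := by
        intro W hW hlaw
        have hmeas : AEStronglyMeasurable (fun x : ℝ => x) (Measure.map W P) :=
          measurable_id.aestronglyMeasurable
        constructor
        · have h1 : Integrable (fun x : ℝ => x) (Measure.map W P) := by
            rw [hlaw]; exact aux_gauss_integrable_id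
          exact (integrable_map_measure hmeas hW.aemeasurable).mp h1
        · have h2 := integral_map hW.aemeasurable hmeas
          rw [hlaw, aux_gauss_integral_id] at h2
          exact h2.symm
      obtain ⟨hXsq_int, hXsq⟩ := msq X hX hXlaw
      obtain ⟨hYsq_int, hYsq⟩ := msq Y hY hYlaw
      obtain ⟨hZsq_int, hZsq⟩ := msq Z hZ hZlaw
      obtain ⟨hXint, hXmean⟩ := mid X hX hXlaw
      obtain ⟨hYint, hYmean⟩ := mid Y hY hYlaw
      obtain ⟨hZint, hZmean⟩ := mid Z hZ hZlaw
      -- pairwise independence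
      have hXYi : IndepFun X Y P := by
        have := hindep.indepFun (show (0 : Fin 3) ≠ 1 by decide); simpa using this
      have hXZi : IndepFun X Z P := by
        have := hindep.indepFun (show (0 : Fin 3) ≠ 2 by decide); simpa using this
      have hYZi : IndepFun Y Z P := by
        have := hindep.indepFun (show (1 : Fin 3) ≠ 2 by decide); simpa using this
      have hXYint : Integrable (fun ω => X ω * Y ω) P := hXYi.integrable_mul hXint hYint
      have hXZint : Integrable (fun ω => X ω * Z ω) P := hXZi.integrable_mul hXint hZint
      have hYZint : Integrable (fun ω => Y ω * Z ω) P := hYZi.integrable_mul hYint hZint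
      have hXYmul : ∫ ω, X ω * Y ω ∂P = 0 := by
        have h := hXYi.integral_fun_mul_eq_mul_integral hX.aestronglyMeasurable hY.aestronglyMeasurable
        calc ∫ ω, X ω * Y ω ∂P = (∫ ω, X ω ∂P) * ∫ ω, Y ω ∂P := h
          _ = 0 := by rw [hXmean, zero_mul]
      have hXZmul : ∫ ω, X ω * Z ω ∂P = 0 := by
        have h := hXZi.integral_fun_mul_eq_mul_integral hX.aestronglyMeasurable hZ.aestronglyMeasurable
        calc ∫ ω, X ω * Z ω ∂P = (∫ ω, X ω ∂P) * ∫ ω, Z ω ∂P := h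
          _ = 0 := by rw [hXmean, zero_mul]
      have hYZmul : ∫ ω, Y ω * Z ω ∂P = 0 := by
        have h := hYZi.integral_fun_mul_eq_mul_integral hY.aestronglyMeasurable hZ.aestronglyMeasurable
        calc ∫ ω, Y ω * Z ω ∂P = (∫ ω, Y ω ∂P) * ∫ ω, Z ω ∂P := h
          _ = 0 := by rw [hYmean, zero_mul]
      -- T := s * (X - Y)
      have hTsq_int : Integrable (fun ω => (s * (X ω - Y ω)) ^ 2) P := by
        have h0 : Integrable (fun ω => (b * σ / (2 * f)) *
            (X ω ^ 2 - 2 * (X ω * Y ω) + Y ω ^ 2)) P :=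
          ((hXsq_int.sub (hXYint.const_mul 2)).add hYsq_int).const_mul _
        apply h0.congr
        filter_upwards with ω
        rw [mul_pow, hs2]; ring
      have hTsq_val : ∫ ω, (s * (X ω - Y ω)) ^ 2 ∂P = b * σ / f := by
        calc ∫ ω, (s * (X ω - Y ω)) ^ 2 ∂P
            = ∫ ω, (b * σ / (2 * f)) * (X ω ^ 2 - 2 * (X ω * Y ω) + Y ω ^ 2) ∂P := by
              apply integral_congr_ae
              filter_upwards with ω
              rw [mul_pow, hs2]; ring
          _ = (b * σ / (2 * f)) * ∫ ω, (X ω ^ 2 - 2 * (X ω * Y ω) + Y ω ^ 2) ∂P :=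
              integral_const_mul _ _
          _ = (b * σ / (2 * f)) * ((∫ ω, X ω ^ 2 ∂P - 2 * ∫ ω, X ω * Y ω ∂P)
                + ∫ ω, Y ω ^ 2 ∂P) := by
              have h1 : Integrable (fun ω => X ω ^ 2 - 2 * (X ω * Y ω)) P :=
                hXsq_int.sub (hXYint.const_mul 2)
              have h2 : Integrable (fun ω => 2 * (X ω * Y ω)) P := hXYint.const_mul 2
              rw [integral_add h1 hYsq_int, integral_sub hXsq_int h2, integral_const_mul]
          _ = b * σ / f := by
              rw [hXsq, hYsq, hXYmul]
              field_simp
              ring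
      have hTZ_int : Integrable (fun ω => s * (X ω - Y ω) * Z ω) P := by
        have h0 : Integrable (fun ω => s * (X ω * Z ω - Y ω * Z ω)) P :=
          (hXZint.sub hYZint).const_mul s
        apply h0.congr
        filter_upwards with ω
        ring
      have hTZ_val : ∫ ω, s * (X ω - Y ω) * Z ω ∂P = 0 := by
        calc ∫ ω, s * (X ω - Y ω) * Z ω ∂P
            = ∫ ω, s * (X ω * Z ω - Y ω * Z ω) ∂P := by
              apply integral_congr_ae; filter_upwards with ω; ring
          _ = s * ∫ ω, (X ω * Z ω - Y ω * Z ω) ∂P := integral_const_mul _ _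
          _ = 0 := by rw [integral_sub hXZint hYZint, hXZmul, hYZmul]; ring
      -- independence of functionals
      have hφ1 : Measurable (fun p : ℝ × ℝ × ℝ => (s * (p.1 - p.2.1)) ^ 2) := by fun_prop
      have hψ1 : Measurable (fun q : ℝ × ℝ => q.1 ^ 2) := by fun_prop
      have hφ2 : Measurable (fun p : ℝ × ℝ × ℝ => s * (p.1 - p.2.1) * p.2.2) := by fun_prop
      have hψ2 : Measurable (fun q : ℝ × ℝ => q.1 * q.2 / Real.sqrt I) := by fun_prop
      have hφ3 : Measurable (fun p : ℝ × ℝ × ℝ => p.2.2 ^ 2) := by fun_prop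
      have hψ3 : Measurable (fun q : ℝ × ℝ => (q.2 / Real.sqrt I) ^ 2) := by fun_prop
      have hI1 : IndepFun (fun ω => (s * (X ω - Y ω)) ^ 2) (fun ω => U₁ ω ^ 2) P :=
        hindep2.comp hφ1 hψ1
      have hI2 : IndepFun (fun ω => s * (X ω - Y ω) * Z ω) (fun ω => U₁ ω * U₂ ω / Real.sqrt I) P :=
        hindep2.comp hφ2 hψ2
      have hI3 : IndepFun (fun ω => Z ω ^ 2) (fun ω => (U₂ ω / Real.sqrt I) ^ 2) P :=
        hindep2.comp hφ3 hψ3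
      -- integrabilities of products
      have hU12int : Integrable (fun ω => U₁ ω * U₂ ω / Real.sqrt I) P := by
        have hmul : Integrable (fun ω => U₁ ω * U₂ ω) P := by
          have hg : Integrable (fun ω => (U₁ ω ^ 2 + U₂ ω ^ 2) / 2) P :=
            (hU₁int.add hU₂int).div_const 2
          apply hg.mono' (hU₁.mul hU₂).aestronglyMeasurable
          filter_upwards with ω
          rw [Real.norm_eq_abs, Pi.mul_apply, abs_mul]
          nlinarith [sq_nonneg (|U₁ ω| - |U₂ ω|), sq_abs (U₁ ω), sq_abs (U₂ ω),
            abs_nonneg (U₁ ω), abs_nonneg (U₂ ω)]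
        exact hmul.div_const _
      have hU2I_int : Integrable (fun ω => (U₂ ω / Real.sqrt I) ^ 2) P := by
        apply (hU₂int.div_const I).congr
        filter_upwards with ω
        rw [div_pow, hsI]
      have hU2I_val : ∫ ω, (U₂ ω / Real.sqrt I) ^ 2 ∂P = (∫ ω, U₂ ω ^ 2 ∂P) / I := by
        rw [← integral_div]
        apply integral_congr_ae
        filter_upwards with ω
        rw [div_pow, hsI]
      have hA_int : Integrable (fun ω => (s * (X ω - Y ω)) ^ 2 * U₁ ω ^ 2) P :=
        hI1.integrable_mul hTsq_int hU₁int
      have hB_int : Integrable (fun ω => s * (X ω - Y ω) * Z ω * (U₁ ω * U₂ ω / Real.sqrt I)) P :=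
        hI2.integrable_mul hTZ_int hU12int
      have hC_int : Integrable (fun ω => Z ω ^ 2 * (U₂ ω / Real.sqrt I) ^ 2) P :=
        hI3.integrable_mul hZsq_int hU2I_int
      -- product expectations
      have hE1 : ∫ ω, (s * (X ω - Y ω)) ^ 2 * U₁ ω ^ 2 ∂P
          = (∫ ω, (s * (X ω - Y ω)) ^ 2 ∂P) * ∫ ω, U₁ ω ^ 2 ∂P :=
        hI1.integral_fun_mul_eq_mul_integral (((hX.sub hY).const_mul s).pow_const 2).aestronglyMeasurable
          (hU₁.pow_const 2).aestronglyMeasurable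
      have hE2 : ∫ ω, s * (X ω - Y ω) * Z ω * (U₁ ω * U₂ ω / Real.sqrt I) ∂P
          = (∫ ω, s * (X ω - Y ω) * Z ω ∂P) * ∫ ω, U₁ ω * U₂ ω / Real.sqrt I ∂P :=
        hI2.integral_fun_mul_eq_mul_integral (((hX.sub hY).const_mul s).mul hZ).aestronglyMeasurable
          ((hU₁.mul hU₂).div_const _).aestronglyMeasurable
      have hE3 : ∫ ω, Z ω ^ 2 * (U₂ ω / Real.sqrt I) ^ 2 ∂P
          = (∫ ω, Z ω ^ 2 ∂P) * ∫ ω, (U₂ ω / Real.sqrt I) ^ 2 ∂P :=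
        hI3.integral_fun_mul_eq_mul_integral (hZ.pow_const 2).aestronglyMeasurable
          ((hU₂.div_const _).pow_const 2).aestronglyMeasurable
      -- expansion
      calc ∫ ω, (U₁ ω * s * (X ω - Y ω) + (U₂ ω / Real.sqrt I) * Z ω) ^ 2 ∂P
          = ∫ ω, ((s * (X ω - Y ω)) ^ 2 * U₁ ω ^ 2
              + 2 * (s * (X ω - Y ω) * Z ω * (U₁ ω * U₂ ω / Real.sqrt I))
              + Z ω ^ 2 * (U₂ ω / Real.sqrt I) ^ 2) ∂P := by
            apply integral_congr_ae
            filter_upwards with ω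
            ring
        _ = (∫ ω, (s * (X ω - Y ω)) ^ 2 * U₁ ω ^ 2 ∂P)
              + 2 * (∫ ω, s * (X ω - Y ω) * Z ω * (U₁ ω * U₂ ω / Real.sqrt I) ∂P)
              + ∫ ω, Z ω ^ 2 * (U₂ ω / Real.sqrt I) ^ 2 ∂P := by
            have hB2_int : Integrable (fun ω =>
                2 * (s * (X ω - Y ω) * Z ω * (U₁ ω * U₂ ω / Real.sqrt I))) P := hB_int.const_mul 2
            have hAB2_int : Integrable (fun ω => (s * (X ω - Y ω)) ^ 2 * U₁ ω ^ 2
                + 2 * (s * (X ω - Y ω) * Z ω * (U₁ ω * U₂ ω / Real.sqrt I))) P :=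
              hA_int.add hB2_int
            rw [integral_add hAB2_int hC_int, integral_add hA_int hB2_int, integral_const_mul]
        _ = (b * σ / f) * ∫ ω, (U₁ ω) ^ 2 ∂P + (∫ ω, (U₂ ω) ^ 2 ∂P) / I := by
            rw [hE1, hE2, hE3, hTsq_val, hTZ_val, hZsq, hU2I_val]
            ring
    intro D hD
    rwa [key] at hD
end

section
/- Let γ : [0,T] → ℝ solve the Riccati equation γ'(t) = −2a(t)γ(t) − γ(t)² f(t)²/(ε² σ(t)²) + b(t)², γ(0) = 0, where a, b, f, σ are continuous, f, σ, b bounded away from 0 and bounded above. Then γ(t) ≥ 0 for all t ∈ [0,T] and γ(t) ≤ ε·C for all t ∈ [0,T], where C depends only on the bounds for a, b, f, σ (not on ε). -/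
open Real Filter Topology

private lemma slope_left_nonneg {γ : ℝ → ℝ} {s d : ℝ} (hd : HasDerivAt γ d s)
    (h : ∀ᶠ t in 𝓝[<] s, γ t ≤ γ s) : 0 ≤ d := by
  have hs : Tendsto (slope γ s) (𝓝[≠] s) (𝓝 d) := hasDerivAt_iff_tendsto_slope.mp hd
  have hs' : Tendsto (slope γ s) (𝓝[<] s) (𝓝 d) :=
    hs.mono_left (nhdsWithin_mono _ fun x hx => ne_of_lt hx)
  refine ge_of_tendsto hs' ?_
  filter_upwards [h, self_mem_nhdsWithin] with t ht ht'
  have hts : t < s := ht'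
  rw [slope_def_field]
  exact div_nonneg_iff.mpr (Or.inr ⟨by linarith, by linarith⟩)

private lemma slope_right_nonpos {γ : ℝ → ℝ} {s d : ℝ} (hd : HasDerivAt γ d s)
    (h : ∀ᶠ t in 𝓝[>] s, γ t ≤ γ s) : d ≤ 0 := by
  have hs : Tendsto (slope γ s) (𝓝[≠] s) (𝓝 d) := hasDerivAt_iff_tendsto_slope.mp hd
  have hs' : Tendsto (slope γ s) (𝓝[>] s) (𝓝 d) :=
    hs.mono_left (nhdsWithin_mono _ fun x hx => ne_of_gt hx)
  refine le_of_tendsto hs' ?_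
  filter_upwards [h, self_mem_nhdsWithin] with t ht ht'
  have hts : s < t := ht'
  rw [slope_def_field]
  exact div_nonpos_of_nonpos_of_nonneg (by linarith) (by linarith)

set_option maxHeartbeats 1000000 in
theorem stmt_14 (T : ℝ) (hT : 0 < T)
    (a b f σ : ℝ → ℝ)
    (ha : Continuous a) (hb : Continuous b) (hf : Continuous f) (hσ : Continuous σ)
    (c₀ M : ℝ) (hc₀ : 0 < c₀)
    (hbnd : ∀ t ∈ Set.Icc (0:ℝ) T,
      c₀ ≤ f t ∧ c₀ ≤ σ t ∧ c₀ ≤ b t ∧ |a t| ≤ M ∧ f t ≤ M ∧ σ t ≤ M ∧ b t ≤ M) :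
    ∃ C > 0, ∀ ε ∈ Set.Ioc (0:ℝ) 1, ∀ γ : ℝ → ℝ,
      γ 0 = 0 →
      (∀ t ∈ Set.Icc (0:ℝ) T,
        HasDerivAt γ (-2 * a t * γ t - γ t ^ 2 * f t ^ 2 / (ε ^ 2 * σ t ^ 2) + b t ^ 2) t) →
      ∀ t ∈ Set.Icc (0:ℝ) T, 0 ≤ γ t ∧ γ t ≤ ε * C := by
  -- basic bounds
  have h0T : (0:ℝ) ∈ Set.Icc (0:ℝ) T := ⟨le_refl 0, hT.le⟩
  have hc0M : c₀ ≤ M := le_trans (hbnd 0 h0T).1 (hbnd 0 h0T).2.2.2.2.1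
  have hM : 0 < M := lt_of_lt_of_le hc₀ hc0M
  set C : ℝ := M ^ 2 * (2 * M + M ^ 2 + 1) / c₀ ^ 2 with hCdef
  clear_value C
  have hC1 : 1 ≤ C := by
    rw [hCdef, le_div_iff₀ (by positivity)]
    nlinarith
  have hCpos : 0 < C := lt_of_lt_of_le one_pos hC1
  refine ⟨C, hCpos, ?_⟩
  rintro ε ⟨hε0, hε1⟩ γ hγ0 hderiv
  have hcont : ∀ t ∈ Set.Icc (0:ℝ) T, ContinuousAt γ t := fun t ht =>
    (hderiv t ht).continuousAt
  -- Part 1: nonnegativity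
  have hnn : ∀ t ∈ Set.Icc (0:ℝ) T, 0 ≤ γ t := by
    by_contra hcon
    push_neg at hcon
    obtain ⟨t₀, ht₀, hγt₀⟩ := hcon
    set S : Set ℝ := {t | t ∈ Set.Icc (0:ℝ) t₀ ∧ 0 ≤ γ t} with hSdef
    have h0S : (0:ℝ) ∈ S := ⟨⟨le_refl 0, ht₀.1⟩, le_of_eq hγ0.symm⟩
    have hne : S.Nonempty := ⟨0, h0S⟩
    have hbdd : BddAbove S := ⟨t₀, fun x hx => hx.1.2⟩
    set s : ℝ := sSup S with hsdef
    have hs0 : 0 ≤ s := le_csSup hbdd h0S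
    have hst₀ : s ≤ t₀ := csSup_le hne fun x hx => hx.1.2
    have hsIcc : s ∈ Set.Icc (0:ℝ) T := ⟨hs0, le_trans hst₀ ht₀.2⟩
    have hcs : ContinuousAt γ s := hcont s hsIcc
    -- γ s ≥ 0
    have hγs_nonneg : 0 ≤ γ s := by
      by_contra h
      push_neg at h
      have hev : ∀ᶠ x in 𝓝 s, γ x < 0 := hcs.eventually_lt_const h
      obtain ⟨δ, hδ, hδ'⟩ := Metric.eventually_nhds_iff.mp hev
      obtain ⟨x, hxS, hxs⟩ := exists_lt_of_lt_csSup hne (by linarith : s - δ < s)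
      have hxle : x ≤ s := le_csSup hbdd hxS
      have : γ x < 0 := hδ' (by rw [Real.dist_eq]; rw [abs_lt]; constructor <;> linarith)
      linarith [hxS.2]
    have hst₀' : s < t₀ := lt_of_le_of_ne hst₀ (fun h => by rw [h] at hγs_nonneg; linarith)
    -- γ s ≤ 0 : right limit of negative values
    have hγs_nonpos : γ s ≤ 0 := by
      have hte : Tendsto γ (𝓝[>] s) (𝓝 (γ s)) := hcs.tendsto.mono_left nhdsWithin_le_nhds
      refine le_of_tendsto hte ?_
      filter_upwards [Ioo_mem_nhdsGT_of_mem (⟨le_refl s, hst₀'⟩ : s ∈ Set.Ico s t₀)]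
        with t ht
      by_contra hpos
      push_neg at hpos
      have htS : t ∈ S := ⟨⟨le_trans hs0 ht.1.le, ht.2.le⟩, hpos.le⟩
      exact absurd (le_csSup hbdd htS) (not_le.mpr ht.1)
    have hγs : γ s = 0 := le_antisymm hγs_nonpos hγs_nonneg
    -- derivative at s is b s ^ 2 > 0, contradiction with right slope ≤ 0
    have hd := hderiv s hsIcc
    rw [hγs] at hd
    have hd' : HasDerivAt γ (b s ^ 2) s := by
      convert hd using 1; ring
    have hbs : c₀ ≤ b s := (hbnd s hsIcc).2.2.1
    have hle : b s ^ 2 ≤ 0 := by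
      refine slope_right_nonpos hd' ?_
      filter_upwards [Ioo_mem_nhdsGT_of_mem (⟨le_refl s, hst₀'⟩ : s ∈ Set.Ico s t₀)]
        with t ht
      by_contra hpos
      push_neg at hpos
      rw [hγs] at hpos
      have htS : t ∈ S := ⟨⟨le_trans hs0 ht.1.le, ht.2.le⟩, hpos.le⟩
      exact absurd (le_csSup hbdd htS) (not_le.mpr ht.1)
    nlinarith
  -- Part 2: upper bound
  have hub : ∀ t ∈ Set.Icc (0:ℝ) T, γ t ≤ ε * C := by
    by_contra hcon
    push_neg at hcon
    obtain ⟨t₀, ht₀, hγt₀⟩ := hcon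
    have hεC : 0 < ε * C := mul_pos hε0 hCpos
    set S : Set ℝ := {t | t ∈ Set.Icc (0:ℝ) t₀ ∧ ε * C ≤ γ t} with hSdef
    have ht₀S : t₀ ∈ S := ⟨⟨ht₀.1, le_refl _⟩, hγt₀.le⟩
    have hne : S.Nonempty := ⟨t₀, ht₀S⟩
    have hbdd : BddBelow S := ⟨0, fun x hx => hx.1.1⟩
    set s : ℝ := sInf S with hsdef
    have hs0 : 0 ≤ s := le_csInf hne fun x hx => hx.1.1
    have hst₀ : s ≤ t₀ := csInf_le hbdd ht₀S
    have hsIcc : s ∈ Set.Icc (0:ℝ) T := ⟨hs0, le_trans hst₀ ht₀.2⟩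
    have hcs : ContinuousAt γ s := hcont s hsIcc
    -- γ s ≥ ε C
    have hγs_ge : ε * C ≤ γ s := by
      by_contra h
      push_neg at h
      have hev : ∀ᶠ x in 𝓝 s, γ x < ε * C := hcs.eventually_lt_const h
      obtain ⟨δ, hδ, hδ'⟩ := Metric.eventually_nhds_iff.mp hev
      obtain ⟨x, hxS, hxs⟩ := exists_lt_of_csInf_lt hne (by linarith : s < s + δ)
      have hxge : s ≤ x := csInf_le hbdd hxS
      have : γ x < ε * C := hδ' (by rw [Real.dist_eq]; rw [abs_lt]; constructor <;> linarith)
      linarith [hxS.2]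
    have hspos : 0 < s := by
      rcases lt_or_eq_of_le hs0 with h | h
      · exact h
      · exfalso; rw [← h] at hγs_ge; rw [← hγ0] at hεC; linarith
    -- γ s ≤ ε C : left limit of values < εC
    have hγs_le : γ s ≤ ε * C := by
      have hte : Tendsto γ (𝓝[<] s) (𝓝 (γ s)) := hcs.tendsto.mono_left nhdsWithin_le_nhds
      refine le_of_tendsto hte ?_
      filter_upwards [Ioo_mem_nhdsLT_of_mem (⟨hspos, le_refl s⟩ : s ∈ Set.Ioc 0 s)]
        with t ht
      by_contra hge
      push_neg at hge
      have htS : t ∈ S := ⟨⟨ht.1.le, le_trans ht.2.le hst₀⟩, hge.le⟩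
      exact absurd (csInf_le hbdd htS) (not_le.mpr ht.2)
    have hγs : γ s = ε * C := le_antisymm hγs_le hγs_ge
    -- derivative at s is negative
    obtain ⟨hfs, hσs, hbs, has, hfM, hσM, hbM⟩ := hbnd s hsIcc
    have hd := hderiv s hsIcc
    have hdneg : -2 * a s * γ s - γ s ^ 2 * f s ^ 2 / (ε ^ 2 * σ s ^ 2) + b s ^ 2 < 0 := by
      have haM : -M ≤ a s ∧ a s ≤ M := abs_le.mp has
      have h1 : -2 * a s * γ s ≤ 2 * M * (ε * C) := by
        rw [hγs]; nlinarith [haM.1, hεC]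
      have hσpos : 0 < σ s := lt_of_lt_of_le hc₀ hσs
      have h2 : C ^ 2 * c₀ ^ 2 / M ^ 2 ≤ γ s ^ 2 * f s ^ 2 / (ε ^ 2 * σ s ^ 2) := by
        have hf2 : c₀ ^ 2 ≤ f s ^ 2 := by nlinarith
        have hnum : ε ^ 2 * C ^ 2 * c₀ ^ 2 ≤ γ s ^ 2 * f s ^ 2 := by
          rw [hγs]
          have := mul_le_mul_of_nonneg_left hf2 (by positivity : (0:ℝ) ≤ ε ^ 2 * C ^ 2)
          nlinarith
        have hσ2 : σ s ^ 2 ≤ M ^ 2 := pow_le_pow_left₀ (by linarith) hσM 2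
        have hden : ε ^ 2 * σ s ^ 2 ≤ ε ^ 2 * M ^ 2 :=
          mul_le_mul_of_nonneg_left hσ2 (by positivity)
        have hdenpos : (0:ℝ) < ε ^ 2 * σ s ^ 2 := by positivity
        have hkey : ε ^ 2 * C ^ 2 * c₀ ^ 2 / (ε ^ 2 * M ^ 2) ≤
            γ s ^ 2 * f s ^ 2 / (ε ^ 2 * σ s ^ 2) :=
          div_le_div₀ (by positivity) hnum hdenpos hden
        have heq : C ^ 2 * c₀ ^ 2 / M ^ 2 = ε ^ 2 * C ^ 2 * c₀ ^ 2 / (ε ^ 2 * M ^ 2) := by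
          rw [div_eq_div_iff (by positivity) (by positivity)]; ring
        rw [heq]; exact hkey
      have h3 : b s ^ 2 ≤ M ^ 2 := by nlinarith
      have h4 : C ^ 2 * c₀ ^ 2 / M ^ 2 = C * (2 * M + M ^ 2 + 1) := by
        rw [hCdef]; field_simp
      have h5 : 2 * M * (ε * C) ≤ 2 * M * C := by
        nlinarith [mul_nonneg (mul_nonneg (by linarith : (0:ℝ) ≤ 2 * M) hCpos.le)
          (by linarith : (0:ℝ) ≤ 1 - ε)]
      have h6 : M ^ 2 + 1 ≤ (M ^ 2 + 1) * C := by nlinarith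
      rw [h4] at h2
      have h7 : C * (2 * M + M ^ 2 + 1) = 2 * M * C + (M ^ 2 + 1) * C := by ring
      linarith
    have h0led : 0 ≤ -2 * a s * γ s - γ s ^ 2 * f s ^ 2 / (ε ^ 2 * σ s ^ 2) + b s ^ 2 := by
      refine slope_left_nonneg hd ?_
      filter_upwards [Ioo_mem_nhdsLT_of_mem (⟨hspos, le_refl s⟩ : s ∈ Set.Ioc 0 s)]
        with t ht
      by_contra hge
      push_neg at hge
      have hge' : ε * C ≤ γ t := by rw [hγs] at hge; exact hge.le
      have htS : t ∈ S := ⟨⟨ht.1.le, le_trans ht.2.le hst₀⟩, hge'⟩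
      exact absurd (csInf_le hbdd htS) (not_le.mpr ht.2)
    linarith
  exact fun t ht => ⟨hnn t ht, hub t ht⟩
end

section
/- Let γ_* : (0,T] → ℝ satisfy γ_*'(t) = −2a(t)γ_*(t) − (γ_*(t)² f(t)² /(ε σ(t)²)) + b(t)²/ε with γ_*(0) = 0, and set γ₀(t) = b(t)σ(t)/f(t), where a,b,f,σ are continuous, f,σ,b ≥ c₀ > 0 and bounded above. Then for every t₀ ∈ (0,T], sup_{t₀ ≤ t ≤ T} |γ_*(t) − γ₀(t)| → 0 as ε → 0. -/
open Real Filter Set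

theorem stay_le' {g g' : ℝ → ℝ} {a b K : ℝ}
    (hg : ∀ x ∈ Set.Icc a b, HasDerivAt g (g' x) x)
    (hga : g a ≤ K)
    (hbound : ∀ x ∈ Set.Ico a b, g x = K → g' x < 0) :
    ∀ x ∈ Set.Icc a b, g x ≤ K := by
  intro x hx
  have hcont : ContinuousOn g (Set.Icc a b) :=
    fun y hy => (hg y hy).continuousAt.continuousWithinAt
  exact image_le_of_deriv_right_lt_deriv_boundary (B := fun _ => K) (B' := fun _ => 0)
    hcont (fun y hy => (hg y (Set.Ico_subset_Icc_self hy)).hasDerivWithinAt) hga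
    (fun y => hasDerivAt_const y K) (fun y hy hEq => hbound y hy hEq) hx

theorem descend' {g g' : ℝ → ℝ} {a b L R K : ℝ} (hab : a ≤ b)
    (hg : ∀ x ∈ Set.Icc a b, HasDerivAt g (g' x) x)
    (hga : g a ≤ K) (hR : 0 < R) (hLK : L ≤ K)
    (hbound : ∀ x ∈ Set.Icc a b, L ≤ g x → g' x ≤ -R)
    (htime : 2 * (K - L) ≤ R * (b - a)) : g b ≤ L := by
  obtain ⟨τ, hτdef⟩ : ∃ τ, τ = a + 2 * (K - L) / R := ⟨_, rfl⟩
  have hKL : 0 ≤ K - L := by linarith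
  have hτa : a ≤ τ := by
    have : 0 ≤ 2 * (K - L) / R := by positivity
    linarith [hτdef, this]
  have hτb : τ ≤ b := by
    have : 2 * (K - L) / R ≤ b - a := by
      rw [div_le_iff₀ hR]; linarith [mul_comm R (b - a)]
    linarith [hτdef, this]
  have hBval : K - R / 2 * (τ - a) = L := by
    have : τ - a = 2 * (K - L) / R := by rw [hτdef]; ring
    rw [this]; field_simp; ring
  have h1 : g τ ≤ L := by
    have := image_le_of_deriv_right_lt_deriv_boundary
      (f := g) (f' := g') (a := a) (b := τ)
      (B := fun x => K - R / 2 * (x - a)) (B' := fun _ => -(R / 2))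
      (fun y hy => (hg y ⟨hy.1, hy.2.trans hτb⟩).continuousAt.continuousWithinAt)
      (fun y hy => (hg y ⟨hy.1, hy.2.le.trans hτb⟩).hasDerivWithinAt)
      (by simpa using hga)
      (fun y => by
        have : HasDerivAt (fun x => K - R / 2 * (x - a)) (-(R / 2 * 1)) y :=
          (((hasDerivAt_id y).sub_const a).const_mul (R / 2)).const_sub K
        simpa using this)
      (fun y hy hEq => by
        have hyb : y ∈ Set.Icc a b := ⟨hy.1, hy.2.le.trans hτb⟩
        have hLy : L ≤ g y := by
          rw [hEq]
          have : R / 2 * (y - a) ≤ R / 2 * (τ - a) := by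
            apply mul_le_mul_of_nonneg_left (by linarith [hy.2.le]) (by positivity)
          linarith [hBval]
        have := hbound y hyb hLy
        linarith)
      (Set.right_mem_Icc.2 hτa)
    calc g τ ≤ K - R / 2 * (τ - a) := this
    _ = L := hBval
  exact stay_le' (fun x hx => hg x ⟨hτa.trans hx.1, hx.2⟩) h1
    (fun x hx hEq => by
      have : g' x ≤ -R := hbound x ⟨hτa.trans hx.1, hx.2.le⟩ (le_of_eq hEq.symm)
      linarith) b (Set.right_mem_Icc.2 hτb)

theorem ascend' {g g' : ℝ → ℝ} {a b L R K : ℝ} (hab : a ≤ b)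
    (hg : ∀ x ∈ Set.Icc a b, HasDerivAt g (g' x) x)
    (hga : K ≤ g a) (hR : 0 < R) (hLK : K ≤ L)
    (hbound : ∀ x ∈ Set.Icc a b, g x ≤ L → R ≤ g' x)
    (htime : 2 * (L - K) ≤ R * (b - a)) : L ≤ g b := by
  have := descend' (g := fun x => -g x) (g' := fun x => -g' x) (L := -L) (K := -K)
    hab (fun x hx => (hg x hx).neg) (by show -g a ≤ -K; linarith) hR (by linarith)
    (fun x hx hLe => by
      have hgx : g x ≤ L := by
        have : -L ≤ -g x := hLe
        linarith
      show -g' x ≤ -R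
      linarith [hbound x hx hgx])
    (by linarith)
  have h2 : -g b ≤ -L := this
  linarith

theorem stay_ge' {g g' : ℝ → ℝ} {a b K : ℝ}
    (hg : ∀ x ∈ Set.Icc a b, HasDerivAt g (g' x) x)
    (hga : K ≤ g a)
    (hbound : ∀ x ∈ Set.Ico a b, g x = K → 0 < g' x) :
    ∀ x ∈ Set.Icc a b, K ≤ g x := by
  intro x hx
  have h2 := stay_le' (g := fun x => -g x) (g' := fun x => -g' x) (K := -K)
    (fun y hy => (hg y hy).neg) (by show -g a ≤ -K; linarith)
    (fun y hy hEq => by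
      have hEq' : -g y = -K := hEq
      have hgy : g y = K := by linarith
      show -g' y < 0
      linarith [hbound y hy hgy]) x hx
  have h3 : -g x ≤ -K := h2
  linarith

theorem my_div_le_div {a b c d : ℝ} (hc : 0 ≤ c) (hac : a ≤ c) (hd : 0 < d) (hbd : d ≤ b) :
    a / b ≤ c / d := by
  have hb : 0 < b := hd.trans_le hbd
  rw [div_le_div_iff₀ hb hd]
  nlinarith


theorem sq_diff_up {m δ Q g0 gx : ℝ} (hδ : 0 < δ) (hm : 0 < m) (hmQ : m ≤ Q)
    (hQx : g0 ≤ Q + δ) (hLx : Q + 2 * δ ≤ gx) (h0 : 0 ≤ g0) :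
    g0 ^ 2 - gx ^ 2 ≤ -(m * δ) := by
  have f1 : δ ≤ gx - g0 := by linarith
  have f2 : m ≤ gx + g0 := by linarith
  have := mul_le_mul f1 f2 (by linarith) (by linarith)
  nlinarith [this]

theorem sq_diff_dn {m δ q g0 gx : ℝ} (hδ : 0 < δ) (hm : 0 < m) (hδm : 2 * δ ≤ m)
    (hmq : m ≤ q) (hqx : q - δ ≤ g0) (hLx : gx ≤ q - 2 * δ) (h0 : 0 ≤ gx) :
    m * δ / 2 ≤ g0 ^ 2 - gx ^ 2 := by
  have f1 : δ ≤ g0 - gx := by linarith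
  have f2 : m / 2 ≤ g0 + gx := by linarith
  have := mul_le_mul f1 f2 (by linarith) (by linarith)
  nlinarith [this]

theorem drift_bd {A M g Bm : ℝ} (hA : |A| ≤ M) (h0 : 0 ≤ g) (hB : g ≤ Bm) :
    -2 * A * g ≤ 2 * M * Bm ∧ -(2 * M * Bm) ≤ -2 * A * g := by
  have h := abs_le.1 hA
  have hM0 : 0 ≤ M := (abs_nonneg A).trans hA
  have p1 := mul_le_mul_of_nonneg_right h.1 h0
  have p2 := mul_le_mul_of_nonneg_right h.2 h0
  have p3 := mul_le_mul_of_nonneg_left hB hM0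
  constructor <;> nlinarith [p1, p2, p3]

set_option maxHeartbeats 2000000 in
theorem stmt_15 (T c₀ M : ℝ) (hT : 0 < T) (hc₀ : 0 < c₀)
    (a b f σ : ℝ → ℝ)
    (ha : Continuous a) (hb : Continuous b) (hf : Continuous f) (hσ : Continuous σ)
    (hbnd : ∀ t ∈ Set.Icc (0:ℝ) T,
      c₀ ≤ f t ∧ c₀ ≤ σ t ∧ c₀ ≤ b t ∧ |a t| ≤ M ∧ f t ≤ M ∧ σ t ≤ M ∧ b t ≤ M)
    (γs : ℝ → ℝ → ℝ)
    (hode : ∀ ε ∈ Set.Ioc (0:ℝ) 1, γs ε 0 = 0 ∧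
      ∀ t ∈ Set.Icc (0:ℝ) T,
        HasDerivAt (γs ε)
          (-2 * a t * γs ε t - (γs ε t) ^ 2 * f t ^ 2 / (ε * σ t ^ 2) + b t ^ 2 / ε) t) :
    ∀ t₀ ∈ Set.Ioc (0:ℝ) T,
      Tendsto (fun ε => ⨆ t : Set.Icc t₀ T, |γs ε (t : ℝ) - b t * σ t / f t|)
        (nhdsWithin 0 (Set.Ioi 0)) (nhds 0) := by
  intro t₀ ht₀
  obtain ⟨ht₀pos, ht₀T⟩ := ht₀
  have h0T : (0:ℝ) ∈ Set.Icc (0:ℝ) T := ⟨le_refl 0, hT.le⟩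
  have hc₀M : c₀ ≤ M := le_trans (hbnd 0 h0T).1 (hbnd 0 h0T).2.2.2.2.1
  have hMpos : 0 < M := lt_of_lt_of_le hc₀ hc₀M
  obtain ⟨γ₀, hγ₀def⟩ : ∃ g : ℝ → ℝ, g = fun t => b t * σ t / f t := ⟨_, rfl⟩
  obtain ⟨m, hm⟩ : ∃ m : ℝ, m = c₀ ^ 2 / M := ⟨_, rfl⟩
  obtain ⟨Γ, hΓ⟩ : ∃ g : ℝ, g = M ^ 2 / c₀ := ⟨_, rfl⟩
  obtain ⟨Bm, hBm⟩ : ∃ g : ℝ, g = Γ + 2 * M ^ 3 / c₀ ^ 2 + 1 := ⟨_, rfl⟩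
  obtain ⟨ρ, hρ⟩ : ∃ g : ℝ, g = c₀ ^ 2 * m / (2 * M ^ 2) := ⟨_, rfl⟩
  have hmpos : 0 < m := by rw [hm]; positivity
  have hΓpos : 0 < Γ := by rw [hΓ]; positivity
  have hmM : m ≤ M := by rw [hm, div_le_iff₀ hMpos]; nlinarith
  have hMΓ : M ≤ Γ := by rw [hΓ, le_div_iff₀ hc₀]; nlinarith
  have hΓc : Γ * c₀ = M ^ 2 := by rw [hΓ]; field_simp
  have hΓBm : Γ + M ≤ Bm := by
    have h2M : M ≤ 2 * M ^ 3 / c₀ ^ 2 := by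
      rw [le_div_iff₀ (by positivity)]; nlinarith
    rw [hBm]; linarith
  have hBmpos : 0 < Bm := by linarith
  have hρpos : 0 < ρ := by rw [hρ]; positivity
  -- key algebraic inequality for the global bound
  have hkey : 2 * M ^ 3 * Bm + M ^ 4 < Bm ^ 2 * c₀ ^ 2 := by
    have hBmc : Bm * c₀ ^ 2 = M ^ 2 * c₀ + 2 * M ^ 3 + c₀ ^ 2 := by
      rw [hBm, hΓ]; field_simp
    have e : Bm * (Bm * c₀ ^ 2) = Bm * (M ^ 2 * c₀ + 2 * M ^ 3 + c₀ ^ 2) := by rw [hBmc]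
    have hΓBm2 : M ^ 2 ≤ Bm * c₀ := by
      have : Γ ≤ Bm := by linarith
      nlinarith [hΓc]
    have f1 : M ^ 2 * M ^ 2 ≤ M ^ 2 * (Bm * c₀) := by nlinarith
    nlinarith [mul_pos hBmpos (mul_pos hc₀ hc₀), e, f1]
  -- bounds on γ₀
  have hγ₀bd : ∀ x ∈ Set.Icc 0 T, m ≤ γ₀ x ∧ γ₀ x ≤ Γ := by
    intro x hx
    obtain ⟨hfx, hσx, hbx, _, hfM, hσM, hbM⟩ := hbnd x hx
    have hfpos : 0 < f x := lt_of_lt_of_le hc₀ hfx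
    have hβ : γ₀ x = b x * σ x / f x := by rw [hγ₀def]
    constructor
    · rw [hβ, hm]
      exact my_div_le_div (by nlinarith) (by nlinarith) hfpos (by linarith)
    · rw [hβ, hΓ]
      exact my_div_le_div (by positivity) (by nlinarith) hc₀ hfx
  -- ratio bound
  have hratio : ∀ x ∈ Set.Icc 0 T, ∀ ε : ℝ, 0 < ε →
      c₀ ^ 2 / (ε * M ^ 2) ≤ f x ^ 2 / (ε * σ x ^ 2) := by
    intro x hx ε hε
    obtain ⟨hfx, hσx, _, _, hfM, hσM, _⟩ := hbnd x hx
    have hσpos : 0 < σ x := lt_of_lt_of_le hc₀ hσx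
    exact my_div_le_div (by positivity) (by nlinarith)
      (mul_pos hε (pow_pos hσpos 2))
      (mul_le_mul_of_nonneg_left (show σ x ^ 2 ≤ M ^ 2 by nlinarith) hε.le)
  -- rewriting the derivative in terms of γ₀
  have hDeq : ∀ ε : ℝ, 0 < ε → ∀ x ∈ Set.Icc 0 T,
      -2 * a x * γs ε x - (γs ε x) ^ 2 * f x ^ 2 / (ε * σ x ^ 2) + b x ^ 2 / ε
        = -2 * a x * γs ε x + (γ₀ x ^ 2 - γs ε x ^ 2) * (f x ^ 2 / (ε * σ x ^ 2)) := by
    intro ε hε x hx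
    obtain ⟨hfx, hσx, _, _, _, _, _⟩ := hbnd x hx
    have hfpos : 0 < f x := lt_of_lt_of_le hc₀ hfx
    have hσpos : 0 < σ x := lt_of_lt_of_le hc₀ hσx
    have hβ : γ₀ x = b x * σ x / f x := by rw [hγ₀def]
    rw [hβ]
    field_simp
    ring
  -- global bounds
  have hglob : ∀ ε ∈ Set.Ioc (0:ℝ) 1, ∀ x ∈ Set.Icc 0 T, 0 ≤ γs ε x ∧ γs ε x ≤ Bm := by
    intro ε hε
    obtain ⟨hεpos, hε1⟩ := hε
    obtain ⟨hinit, hD⟩ := hode ε ⟨hεpos, hε1⟩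
    have hge : ∀ x ∈ Set.Icc (0:ℝ) T, 0 ≤ γs ε x := by
      apply stay_ge' (g' := fun t =>
        -2 * a t * γs ε t - (γs ε t) ^ 2 * f t ^ 2 / (ε * σ t ^ 2) + b t ^ 2 / ε)
        hD (le_of_eq hinit.symm)
      intro x hx hEq
      obtain ⟨hfx, hσx, hbx, _, _, _, _⟩ := hbnd x (Set.Ico_subset_Icc_self hx)
      have hbpos : 0 < b x := lt_of_lt_of_le hc₀ hbx
      have : -2 * a x * γs ε x - (γs ε x) ^ 2 * f x ^ 2 / (ε * σ x ^ 2) + b x ^ 2 / ε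
          = b x ^ 2 / ε := by rw [hEq]; ring
      rw [this]; exact div_pos (pow_pos hbpos 2) hεpos
    have hle : ∀ x ∈ Set.Icc (0:ℝ) T, γs ε x ≤ Bm := by
      apply stay_le' (g' := fun t =>
        -2 * a t * γs ε t - (γs ε t) ^ 2 * f t ^ 2 / (ε * σ t ^ 2) + b t ^ 2 / ε)
        hD (by rw [hinit]; exact hBmpos.le)
      intro x hx hEq
      have hx' := Set.Ico_subset_Icc_self hx
      obtain ⟨hfx, hσx, hbx, hax, hfM, hσM, hbM⟩ := hbnd x hx'
      have hγ₀x := hγ₀bd x hx'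
      rw [hDeq ε hεpos x hx', hEq]
      have hr := hratio x hx' ε hεpos
      have hrpos : 0 < c₀ ^ 2 / (ε * M ^ 2) := by positivity
      have hγ₀0 : 0 ≤ γ₀ x := le_trans hmpos.le hγ₀x.1
      have hsq : γ₀ x ^ 2 ≤ Γ ^ 2 := pow_le_pow_left₀ hγ₀0 hγ₀x.2 2
      have hsq2 : Γ ^ 2 ≤ Bm ^ 2 := pow_le_pow_left₀ hΓpos.le (by linarith) 2
      have h1 : γ₀ x ^ 2 - Bm ^ 2 ≤ Γ ^ 2 - Bm ^ 2 := by linarith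
      have h0 : Γ ^ 2 - Bm ^ 2 ≤ 0 := by linarith
      have h2 : (γ₀ x ^ 2 - Bm ^ 2) * (f x ^ 2 / (ε * σ x ^ 2))
          ≤ (Γ ^ 2 - Bm ^ 2) * (c₀ ^ 2 / (ε * M ^ 2)) := by
        calc (γ₀ x ^ 2 - Bm ^ 2) * (f x ^ 2 / (ε * σ x ^ 2))
            ≤ (γ₀ x ^ 2 - Bm ^ 2) * (c₀ ^ 2 / (ε * M ^ 2)) := by
              apply mul_le_mul_of_nonpos_left hr (by linarith)
          _ ≤ (Γ ^ 2 - Bm ^ 2) * (c₀ ^ 2 / (ε * M ^ 2)) :=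
              mul_le_mul_of_nonneg_right h1 hrpos.le
      have hεM2 : ε * M ^ 2 ≤ M ^ 2 := by
        have := mul_le_mul_of_nonneg_right hε1 (pow_pos hMpos 2).le
        linarith
      have h3 : (Bm ^ 2 - Γ ^ 2) * c₀ ^ 2 / M ^ 2 ≤ (Bm ^ 2 - Γ ^ 2) * c₀ ^ 2 / (ε * M ^ 2) :=
        my_div_le_div (mul_nonneg (by linarith) (by positivity)) le_rfl
          (by positivity) hεM2
      have h4 : (Γ ^ 2 - Bm ^ 2) * (c₀ ^ 2 / (ε * M ^ 2))
          = -((Bm ^ 2 - Γ ^ 2) * c₀ ^ 2 / (ε * M ^ 2)) := by ring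
      have h5 : 2 * M * Bm < (Bm ^ 2 - Γ ^ 2) * c₀ ^ 2 / M ^ 2 := by
        rw [lt_div_iff₀ (by positivity : (0:ℝ) < M ^ 2)]
        have hΓ4 : Γ ^ 2 * c₀ ^ 2 = M ^ 4 := by rw [hΓ]; field_simp
        linarith [hkey, hΓ4]
      have h6 : -2 * a x * Bm ≤ 2 * M * Bm := (drift_bd hax hBmpos.le le_rfl).1
      linarith [h2, h3, h6, h5, h4.le, h4.ge]
    exact fun x hx => ⟨hge x hx, hle x hx⟩
  -- uniform continuity of γ₀
  have hγ₀cont : ContinuousOn γ₀ (Set.Icc 0 T) := by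
    rw [hγ₀def]
    exact (hb.continuousOn.mul hσ.continuousOn).div hf.continuousOn
      (fun x hx => ne_of_gt (lt_of_lt_of_le hc₀ (hbnd x hx).1))
  have huc := isCompact_Icc.uniformContinuousOn_of_continuous hγ₀cont
  rw [Metric.uniformContinuousOn_iff] at huc
  rw [Metric.tendsto_nhdsWithin_nhds]
  intro η hη
  obtain ⟨δ, hδdef⟩ : ∃ d : ℝ, d = min (η / 4) (m / 2) := ⟨_, rfl⟩
  have hδpos : 0 < δ := by rw [hδdef]; exact lt_min (by linarith) (by linarith)
  have hδm : 2 * δ ≤ m := by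
    have : δ ≤ m / 2 := hδdef ▸ min_le_right _ _
    linarith
  have hδη : 2 * δ ≤ η / 2 := by
    have : δ ≤ η / 4 := hδdef ▸ min_le_left _ _
    linarith
  obtain ⟨h₁, hh₁pos, hucb⟩ := huc δ hδpos
  obtain ⟨h, hhdef⟩ : ∃ x : ℝ, x = min (h₁ / 2) t₀ := ⟨_, rfl⟩
  have hhpos : 0 < h := by rw [hhdef]; exact lt_min (by linarith) ht₀pos
  have hht₀ : h ≤ t₀ := hhdef ▸ min_le_right _ _
  have hhh₁ : h < h₁ := lt_of_le_of_lt (hhdef ▸ min_le_left _ _) (by linarith)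
  obtain ⟨ε₀, hε₀def⟩ :
      ∃ x : ℝ, x = min 1 (min (ρ * δ / (4 * M * Bm)) (h * ρ * δ / (4 * Bm))) := ⟨_, rfl⟩
  have hε₀pos : 0 < ε₀ := by
    rw [hε₀def]
    exact lt_min one_pos (lt_min (by positivity) (by positivity))
  refine ⟨ε₀, hε₀pos, ?_⟩
  intro ε hεIoi hdist
  have hεpos : 0 < ε := hεIoi
  have hεε₀ : ε < ε₀ := by rwa [Real.dist_eq, sub_zero, abs_of_pos hεpos] at hdist
  have hε1 : ε ≤ 1 := le_trans hεε₀.le (hε₀def ▸ min_le_left _ _)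
  have hεa : ε ≤ ρ * δ / (4 * M * Bm) :=
    le_trans hεε₀.le (hε₀def ▸ le_trans (min_le_right _ _) (min_le_left _ _))
  have hεb : ε ≤ h * ρ * δ / (4 * Bm) :=
    le_trans hεε₀.le (hε₀def ▸ le_trans (min_le_right _ _) (min_le_right _ _))
  obtain ⟨hinit, hD⟩ := hode ε ⟨hεpos, hε1⟩
  have hglobε := hglob ε ⟨hεpos, hε1⟩
  obtain ⟨R, hRdef⟩ : ∃ x : ℝ, x = ρ * δ / (2 * ε) := ⟨_, rfl⟩
  have hRpos : 0 < R := by rw [hRdef]; positivity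
  have h2MBm : 2 * M * Bm ≤ R := by
    rw [le_div_iff₀ (by positivity : (0:ℝ) < 4 * M * Bm)] at hεa
    rw [hRdef, le_div_iff₀ (by positivity)]
    linarith [hεa]
  have hRρδ : R * (2 * ε) = ρ * δ := by
    rw [hRdef]; field_simp
  have hclaim : ∀ t ∈ Set.Icc t₀ T, |γs ε t - b t * σ t / f t| ≤ 2 * δ := by
    intro t ht
    have htT : t ∈ Set.Icc (0:ℝ) T := ⟨le_trans ht₀pos.le ht.1, ht.2⟩
    have hbσf : b t * σ t / f t = γ₀ t := by rw [hγ₀def]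
    rw [hbσf]
    obtain ⟨s, hsdef⟩ : ∃ x : ℝ, x = t - h := ⟨_, rfl⟩
    have hs0 : 0 ≤ s := by rw [hsdef]; linarith [ht.1]
    have hst : s ≤ t := by rw [hsdef]; linarith
    have hsub : Set.Icc s t ⊆ Set.Icc (0:ℝ) T :=
      fun x hx => ⟨le_trans hs0 hx.1, le_trans hx.2 ht.2⟩
    have hosc : ∀ x ∈ Set.Icc s t, |γ₀ x - γ₀ t| < δ := by
      intro x hx
      have hd : dist x t < h₁ := by
        rw [Real.dist_eq, abs_of_nonpos (by linarith [hx.2])]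
        rw [hsdef] at hx
        linarith [hx.1]
      have := hucb x (hsub hx) t htT hd
      rwa [Real.dist_eq] at this
    have hγ₀t := hγ₀bd t htT
    have htime : 2 * Bm ≤ R * (t - s) := by
      have hts : t - s = h := by rw [hsdef]; ring
      rw [hts]
      rw [le_div_iff₀ (by positivity : (0:ℝ) < 4 * Bm)] at hεb
      rw [hRdef, div_mul_eq_mul_div, le_div_iff₀ (by positivity)]
      linarith [hεb]
    have hsmem : s ∈ Set.Icc s t := ⟨le_refl s, hst⟩
    have hbase := hglobε s (hsub hsmem)
    -- upper bound
    have hup : γs ε t ≤ γ₀ t + 2 * δ := by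
      apply descend' (K := Bm) (R := R)
        (g' := fun x =>
          -2 * a x * γs ε x - (γs ε x) ^ 2 * f x ^ 2 / (ε * σ x ^ 2) + b x ^ 2 / ε)
        hst (fun x hx => hD x (hsub hx)) hbase.2 hRpos
        (by linarith [hγ₀t.2, hδm, hmM, hΓBm])
        ?_ (by linarith [hγ₀t.1, hmpos, hδpos])
      intro x hx hLx
      have hx' := hsub hx
      obtain ⟨hfx, hσx, hbx, hax, hfM, hσM, hbM⟩ := hbnd x hx'
      have hγ₀x := hγ₀bd x hx'
      have hQx : γ₀ x ≤ γ₀ t + δ := by linarith [(abs_lt.1 (hosc x hx)).2]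
      have hγbd := hglobε x hx'
      show -2 * a x * γs ε x - γs ε x ^ 2 * f x ^ 2 / (ε * σ x ^ 2) + b x ^ 2 / ε ≤ -R
      rw [hDeq ε hεpos x hx']
      have hr := hratio x hx' ε hεpos
      have hrpos : 0 < c₀ ^ 2 / (ε * M ^ 2) := by positivity
      have h1 : γ₀ x ^ 2 - γs ε x ^ 2 ≤ -(m * δ) :=
        sq_diff_up hδpos hmpos hγ₀t.1 hQx hLx (le_trans hmpos.le hγ₀x.1)
      have hmδ : 0 < m * δ := mul_pos hmpos hδpos
      have h2 : (γ₀ x ^ 2 - γs ε x ^ 2) * (f x ^ 2 / (ε * σ x ^ 2))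
          ≤ -(m * δ) * (c₀ ^ 2 / (ε * M ^ 2)) := by
        calc (γ₀ x ^ 2 - γs ε x ^ 2) * (f x ^ 2 / (ε * σ x ^ 2))
            ≤ (γ₀ x ^ 2 - γs ε x ^ 2) * (c₀ ^ 2 / (ε * M ^ 2)) := by
              apply mul_le_mul_of_nonpos_left hr (by linarith)
          _ ≤ -(m * δ) * (c₀ ^ 2 / (ε * M ^ 2)) :=
              mul_le_mul_of_nonneg_right h1 hrpos.le
      have h3 : -(m * δ) * (c₀ ^ 2 / (ε * M ^ 2)) = -(4 * R) := by
        rw [hRdef, hρ]; field_simp; ring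
      have h6 : -2 * a x * γs ε x ≤ 2 * M * Bm := (drift_bd hax hγbd.1 hγbd.2).1
      rw [h3] at h2
      linarith [h2MBm, hRpos]
    -- lower bound
    have hlo : γ₀ t - 2 * δ ≤ γs ε t := by
      apply ascend' (K := 0) (R := R)
        (g' := fun x =>
          -2 * a x * γs ε x - (γs ε x) ^ 2 * f x ^ 2 / (ε * σ x ^ 2) + b x ^ 2 / ε)
        hst (fun x hx => hD x (hsub hx)) hbase.1 hRpos
        (by linarith [hγ₀t.1, hδm])
        ?_ (by linarith [hγ₀t.2, hΓBm, hMpos, htime, hδpos])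
      intro x hx hLx
      have hx' := hsub hx
      obtain ⟨hfx, hσx, hbx, hax, hfM, hσM, hbM⟩ := hbnd x hx'
      have hγ₀x := hγ₀bd x hx'
      have hqx : γ₀ t - δ ≤ γ₀ x := by linarith [(abs_lt.1 (hosc x hx)).1]
      have hγbd := hglobε x hx'
      show R ≤ -2 * a x * γs ε x - γs ε x ^ 2 * f x ^ 2 / (ε * σ x ^ 2) + b x ^ 2 / ε
      rw [hDeq ε hεpos x hx']
      have hr := hratio x hx' ε hεpos
      have hrpos : 0 < c₀ ^ 2 / (ε * M ^ 2) := by positivity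
      have h1 : m * δ / 2 ≤ γ₀ x ^ 2 - γs ε x ^ 2 :=
        sq_diff_dn hδpos hmpos hδm hγ₀t.1 hqx hLx hγbd.1
      have hmδ : 0 < m * δ := mul_pos hmpos hδpos
      have h2 : m * δ / 2 * (c₀ ^ 2 / (ε * M ^ 2))
          ≤ (γ₀ x ^ 2 - γs ε x ^ 2) * (f x ^ 2 / (ε * σ x ^ 2)) := by
        calc m * δ / 2 * (c₀ ^ 2 / (ε * M ^ 2))
            ≤ (γ₀ x ^ 2 - γs ε x ^ 2) * (c₀ ^ 2 / (ε * M ^ 2)) :=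
              mul_le_mul_of_nonneg_right h1 hrpos.le
          _ ≤ (γ₀ x ^ 2 - γs ε x ^ 2) * (f x ^ 2 / (ε * σ x ^ 2)) := by
              apply mul_le_mul_of_nonneg_left hr (by linarith)
      have h3 : m * δ / 2 * (c₀ ^ 2 / (ε * M ^ 2)) = 2 * R := by
        rw [hRdef, hρ]; field_simp
      have h6 : -(2 * M * Bm) ≤ -2 * a x * γs ε x := (drift_bd hax hγbd.1 hγbd.2).2
      rw [h3] at h2
      linarith [h2MBm]
    rw [abs_le]
    constructor <;> linarith
  -- conclude
  have hnonemp : Nonempty (Set.Icc t₀ T) := (Set.nonempty_Icc.2 ht₀T).to_subtype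
  have hsup_le : (⨆ t : Set.Icc t₀ T, |γs ε (t : ℝ) - b t * σ t / f t|) ≤ 2 * δ :=
    ciSup_le fun i => hclaim i i.2
  have hsup_nonneg : 0 ≤ ⨆ t : Set.Icc t₀ T, |γs ε (t : ℝ) - b t * σ t / f t| :=
    Real.iSup_nonneg fun i => abs_nonneg _
  rw [Real.dist_eq, sub_zero, abs_of_nonneg hsup_nonneg]
  linarith [hδη]
end
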